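/- arXiv:0910.3351 — 2 statements merged into one kernel-verified Lean document; each statement's English description precedes it below -/
import Mathlib

section
/- Let k be an algebraic closure of F_p, Λ ≅ Z^s a lattice, and a ∈ k[Λ]. Every solution f in the span of characters of the equation a * f = 0 is a k-linear combination of characters χ : Λ → k^× satisfying Σ_v a(v) χ(v)^{-1} = 0. -/
open Multiplicative

/-- Every solution, in the span of the characters, of the convolution equation
`a * f = 0` on `Λ ≅ ℤ^s` is a `k`-linear combination of characters `χ` satisfying
`Σ_v a(v) χ(v)⁻¹ = 0` (i.e. of `Δ_a`-harmonic characters in the symbolic variety). -/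
theorem stmt_15 (p : ℕ) [Fact p.Prime]
    (k : Type*) [Field k] [Algebra (ZMod p) k] [IsAlgClosure (ZMod p) k]
    (s : ℕ) (a : (Fin s → ℤ) →₀ k) (f : (Fin s → ℤ) → k)
    (hf : f ∈ Submodule.span k
      (Set.range (fun χ : Multiplicative (Fin s → ℤ) →* kˣ =>
        (fun v : Fin s → ℤ => (χ (ofAdd v) : k)))))
    (hharm : ∀ u : Fin s → ℤ, (a.sum fun v c => c * f (u - v)) = 0) :
    f ∈ Submodule.span k
      {g : (Fin s → ℤ) → k | ∃ χ : Multiplicative (Fin s → ℤ) →* kˣ,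
        (a.sum fun v c => c * ((χ (ofAdd v))⁻¹ : kˣ)) = 0 ∧
        g = fun v => (χ (ofAdd v) : k)} := by
  classical
  set V : (Multiplicative (Fin s → ℤ) →* kˣ) → ((Fin s → ℤ) → k) :=
    fun χ => (fun v : Fin s → ℤ => (χ (ofAdd v) : k)) with hV
  rw [Finsupp.mem_span_range_iff_exists_finsupp] at hf
  obtain ⟨c, hc⟩ := hf
  have hli : LinearIndependent k V := by
    have h1 := linearIndependent_monoidHom (Multiplicative (Fin s → ℤ)) k
    have h2 : Function.Injective
        (fun χ : Multiplicative (Fin s → ℤ) →* kˣ => (Units.coeHom k).comp χ) := by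
      intro χ₁ χ₂ h
      refine MonoidHom.ext fun x => Units.ext ?_
      exact DFunLike.congr_fun h x
    exact h1.comp _ h2
  set A : (Multiplicative (Fin s → ℤ) →* kˣ) → k :=
    fun χ => (a.sum fun v cv => cv * ((χ (ofAdd v))⁻¹ : kˣ)) with hA
  have hdiv : ∀ (χ : Multiplicative (Fin s → ℤ) →* kˣ) (u v : Fin s → ℤ),
      (χ (ofAdd (u - v)) : k) = (χ (ofAdd u) : k) * ((χ (ofAdd v))⁻¹ : kˣ) := by
    intro χ u v
    have h0 : ofAdd (u - v) = ofAdd u / ofAdd v := rfl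
    rw [h0, map_div, Units.val_div_eq_div_val, div_eq_mul_inv, Units.val_inv_eq_inv_val]
  have hfu : ∀ u : Fin s → ℤ, f u = ∑ χ ∈ c.support, c χ * V χ u := by
    intro u
    rw [← hc, Finsupp.sum]
    rw [Finset.sum_apply]
    simp
  have key : ∀ u : Fin s → ℤ,
      (∑ χ ∈ c.support, (c χ * A χ) * V χ u) = 0 := by
    intro u
    have h1 := hharm u
    calc (∑ χ ∈ c.support, (c χ * A χ) * V χ u)
        = ∑ χ ∈ c.support, ∑ v ∈ a.support, a v * (c χ * V χ (u - v)) := by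
          apply Finset.sum_congr rfl
          intro χ _
          rw [hA]
          simp only
          rw [Finsupp.sum, Finset.mul_sum, Finset.sum_mul]
          apply Finset.sum_congr rfl
          intro v _
          simp only [hV]
          rw [hdiv χ u v]
          ring
      _ = ∑ v ∈ a.support, a v * (∑ χ ∈ c.support, c χ * V χ (u - v)) := by
          rw [Finset.sum_comm]
          apply Finset.sum_congr rfl
          intro v _
          rw [Finset.mul_sum]
      _ = 0 := by
          rw [← h1, Finsupp.sum]
          apply Finset.sum_congr rfl
          intro v _
          rw [hfu (u - v)]
  have hzero : ∀ χ, c χ * A χ = 0 := by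
    set l : (Multiplicative (Fin s → ℤ) →* kˣ) →₀ k :=
      Finsupp.onFinset c.support (fun χ => c χ * A χ)
        (fun χ h => Finsupp.mem_support_iff.mpr (left_ne_zero_of_mul h)) with hl
    have hlc : Finsupp.linearCombination k V l = 0 := by
      rw [Finsupp.linearCombination_apply]
      rw [hl, Finsupp.onFinset_sum _ (fun χ => by simp)]
      funext u
      rw [Finset.sum_apply]
      simp only [Pi.smul_apply, smul_eq_mul, Pi.zero_apply]
      exact key u
    have h0 := linearIndependent_iff.mp hli l hlc
    intro χ
    have h2 := DFunLike.congr_fun h0 χ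
    simpa [hl] using h2
  rw [← hc]
  apply Submodule.finsuppSum_mem
  intro χ hχ
  have hAχ : A χ = 0 := by
    rcases mul_eq_zero.mp (hzero χ) with h | h
    · exact absurd h hχ
    · exact h
  exact Submodule.smul_mem _ _ (Submodule.subset_span ⟨χ, hAχ, rfl⟩)
end

section
/- Let k be an algebraic closure of F_p, Λ a lattice, and a ∈ k[Λ]. The convolution equation a * f = 0 has no nonzero solution f : Λ → k if and only if a = c·δ_v for some c ∈ k^× and v ∈ Λ (i.e., Δ_a is a nonzero scalar multiple of a shift), if and only if Δ_a is invertible on F(Λ,k). -/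
/-- The convolution operator `Δ_a` acting on all functions `Λ → k`. -/
noncomputable def convMap {k Λ : Type*} [Field k] [AddCommGroup Λ] (a : Λ →₀ k) :
    (Λ → k) →ₗ[k] (Λ → k) where
  toFun f := fun u => a.sum fun v c => c * f (u - v)
  map_add' f g := by
    funext u
    simp [Finsupp.sum, mul_add, Finset.sum_add_distrib]
  map_smul' r f := by
    funext u
    simp [Finsupp.sum, Finset.mul_sum, mul_left_comm]

/-- A finite family of nonzero integer vectors can be separated from zero by a single
integer linear form. -/
lemma sep_form {s : ℕ} : ∀ (F : Finset (Fin s → ℤ)), (∀ d ∈ F, d ≠ 0) →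
    ∃ m : Fin s → ℤ, ∀ d ∈ F, (∑ i, m i * d i) ≠ 0 := by
  classical
  intro F
  induction F using Finset.induction_on with
  | empty => exact fun _ => ⟨0, by simp⟩
  | @insert d F hdF ih =>
    intro hF
    obtain ⟨m, hm⟩ := ih (fun d' hd' => hF d' (Finset.mem_insert_of_mem hd'))
    have hd0 : d ≠ 0 := hF d (Finset.mem_insert_self d F)
    obtain ⟨i, hi⟩ : ∃ i, d i ≠ 0 := by
      by_contra h; push_neg at h; exact hd0 (funext h)
    obtain ⟨c, hc⟩ := Infinite.exists_notMem_finset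
      ((insert d F).image (fun d' => (-(∑ j, m j * d' j)) / d' i))
    refine ⟨fun j => m j + if j = i then c else 0, ?_⟩
    intro d' hd' h0
    have key : (∑ j, (m j + if j = i then c else 0) * d' j)
        = (∑ j, m j * d' j) + c * d' i := by
      simp [add_mul, Finset.sum_add_distrib, ite_mul, zero_mul, Finset.sum_ite_eq']
    rw [key] at h0
    rcases eq_or_ne (d' i) 0 with hdi | hdi
    · rw [hdi, mul_zero, add_zero] at h0
      rcases Finset.mem_insert.mp hd' with rfl | hd'F
      · exact hi hdi
      · exact hm d' hd'F h0
    · apply hc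
      refine Finset.mem_image.mpr ⟨d', hd', ?_⟩
      have : (-(∑ j, m j * d' j)) = c * d' i := by linarith
      rw [this, Int.mul_ediv_cancel _ hdi]

/-- A "Laurent polynomial" with at least two terms over an algebraically closed field
has a nonzero root. -/
lemma exists_nonzero_root {k : Type*} [Field k] [IsAlgClosed k] {α : Type*}
    (S : Finset α) (c : α → k) (e : α → ℤ)
    (hc : ∀ v ∈ S, c v ≠ 0) (he : Set.InjOn e S) (h2 : 2 ≤ S.card) :
    ∃ t : k, t ≠ 0 ∧ ∑ v ∈ S, c v * t ^ (e v) = 0 := by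
  classical
  have hne : S.Nonempty := Finset.card_pos.mp (by omega)
  have hne' : (S.image e).Nonempty := hne.image e
  set n₀ : ℤ := (S.image e).min' hne' with hn₀
  obtain ⟨v₀, hv₀S, hv₀⟩ := Finset.mem_image.mp ((S.image e).min'_mem hne')
  have hmin : ∀ v ∈ S, n₀ ≤ e v := fun v hv =>
    Finset.min'_le _ _ (Finset.mem_image_of_mem e hv)
  obtain ⟨v₁, hv₁S, hv₁⟩ := Finset.exists_mem_ne (s := S) (by omega) v₀
  have he₁ : n₀ < e v₁ := by
    have h1 : n₀ ≤ e v₁ := hmin v₁ hv₁S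
    rcases h1.lt_or_eq with h | h
    · exact h
    · exact absurd (he hv₁S hv₀S (by omega)) hv₁
  set P : Polynomial k := ∑ v ∈ S, Polynomial.C (c v) * Polynomial.X ^ (e v - n₀).toNat
    with hP
  have hcoeff : ∀ j, P.coeff j = ∑ v ∈ S, if j = (e v - n₀).toNat then c v else 0 := by
    intro j
    simp [hP, Polynomial.finset_sum_coeff, Polynomial.coeff_C_mul,
      Polynomial.coeff_X_pow, mul_ite, mul_one, mul_zero]
  have hc0 : P.coeff 0 = c v₀ := by
    rw [hcoeff]
    rw [Finset.sum_eq_single_of_mem v₀ hv₀S]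
    · rw [if_pos (by omega)]
    · intro v hv hvne
      rw [if_neg]
      intro hcon
      have hvmin := hmin v hv
      have : e v = e v₀ := by omega
      exact hvne (he hv hv₀S this)
      
  have hck : P.coeff (e v₁ - n₀).toNat = c v₁ := by
    rw [hcoeff]
    rw [Finset.sum_eq_single_of_mem v₁ hv₁S]
    · rw [if_pos rfl]
    · intro v hv hvne
      rw [if_neg]
      intro hcon
      have hvmin := hmin v hv
      have : e v = e v₁ := by omega
      exact hvne (he hv hv₁S this)
  have hPdeg : P.degree ≠ 0 := by
    have h1 : P.coeff (e v₁ - n₀).toNat ≠ 0 := hck ▸ hc v₁ hv₁S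
    have h2 : (e v₁ - n₀).toNat ≤ P.natDegree := Polynomial.le_natDegree_of_ne_zero h1
    have h3 : 0 < P.natDegree := by omega
    have h4 : 0 < P.degree := Polynomial.natDegree_pos_iff_degree_pos.mp h3
    exact h4.ne'
  obtain ⟨t, ht⟩ := IsAlgClosed.exists_root P hPdeg
  have ht' : P.eval t = 0 := ht
  have ht0 : t ≠ 0 := by
    rintro rfl
    rw [← Polynomial.coeff_zero_eq_eval_zero, hc0] at ht'
    exact hc v₀ hv₀S ht'
  refine ⟨t, ht0, ?_⟩
  have heval : Polynomial.eval t P = ∑ v ∈ S, c v * t ^ ((e v - n₀).toNat) := by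
    simp [hP, Polynomial.eval_finset_sum]
  have hstep : ∑ v ∈ S, c v * t ^ e v
      = t ^ n₀ * ∑ v ∈ S, c v * t ^ ((e v - n₀).toNat) := by
    rw [Finset.mul_sum]
    refine Finset.sum_congr rfl fun v hv => ?_
    have h1 : t ^ e v = t ^ n₀ * t ^ ((e v - n₀).toNat) := by
      rw [← zpow_natCast t (e v - n₀).toNat, ← zpow_add₀ ht0]
      congr 1
      have := hmin v hv
      omega
    rw [h1]
    ring
  rw [hstep, ← heval, ht', mul_zero]

lemma ker_trivial_implies_monomial {k : Type*} [Field k] [IsAlgClosed k] {s : ℕ}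
    (a : (Fin s → ℤ) →₀ k)
    (h : ∀ f : (Fin s → ℤ) → k, convMap a f = 0 → f = 0) :
    ∃ (c : kˣ) (v : Fin s → ℤ), a = Finsupp.single v (c : k) := by
  classical
  have ha : a ≠ 0 := by
    rintro rfl
    have h1 := h (fun _ => 1) (by funext u; simp [convMap])
    simpa using congrFun h1 0
  by_cases hcard : a.support.card = 1
  · obtain ⟨v, c, hc, rfl⟩ := Finsupp.card_support_eq_one'.mp hcard
    exact ⟨Units.mk0 c hc, v, rfl⟩
  · have h2 : 2 ≤ a.support.card := by
      have h1 : 0 < a.support.card :=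
        Finset.card_pos.mpr (Finsupp.support_nonempty_iff.mpr ha)
      omega
    set S := a.support with hS
    set F := ((S ×ˢ S).image (fun p => p.1 - p.2)).filter (fun d => d ≠ 0) with hF
    obtain ⟨m, hm⟩ := sep_form F (fun d hd => (Finset.mem_filter.mp hd).2)
    set L : (Fin s → ℤ) → ℤ := fun v => ∑ i, m i * v i with hL
    have hLsub : ∀ u v, L (u - v) = L u - L v := by
      intro u v
      simp [hL, mul_sub, Finset.sum_sub_distrib]
    have hinj : Set.InjOn (fun v => -(L v)) S := by
      intro x hx y hy hxy
      by_contra hne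
      have hd : x - y ∈ F := Finset.mem_filter.mpr
        ⟨Finset.mem_image.mpr ⟨(x, y), Finset.mem_product.mpr ⟨hx, hy⟩, rfl⟩,
          sub_ne_zero.mpr hne⟩
      apply hm _ hd
      have hxy' : L x = L y := neg_injective hxy
      calc (∑ i, m i * (x - y) i) = L (x - y) := rfl
        _ = L x - L y := hLsub x y
        _ = 0 := by rw [hxy', sub_self]
    obtain ⟨t, ht0, htsum⟩ := exists_nonzero_root S (fun v => a v) (fun v => -(L v))
      (fun v hv => Finsupp.mem_support_iff.mp hv) hinj h2
    have hf := h (fun u => t ^ (L u)) ?_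
    · have h1 := congrFun hf 0
      simp only [Pi.zero_apply] at h1
      have hL0 : L 0 = 0 := by simp [hL]
      rw [hL0] at h1
      simp at h1
    · funext u
      simp only [convMap, LinearMap.coe_mk, AddHom.coe_mk, Finsupp.sum, Pi.zero_apply]
      have hterm : ∀ v ∈ S, a v * t ^ (L (u - v))
          = t ^ (L u) * (a v * t ^ (-(L v))) := by
        intro v hv
        rw [hLsub, sub_eq_add_neg, zpow_add₀ ht0]
        ring
      rw [Finset.sum_congr rfl hterm, ← Finset.mul_sum, htsum, mul_zero]

lemma monomial_implies_bijective {k : Type*} [Field k] {s : ℕ}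
    (a : (Fin s → ℤ) →₀ k)
    (hmono : ∃ (c : kˣ) (v : Fin s → ℤ), a = Finsupp.single v (c : k)) :
    Function.Bijective (convMap a) := by
  obtain ⟨c, v, rfl⟩ := hmono
  have hc : (c : k) ≠ 0 := c.ne_zero
  have happ : ∀ (f : (Fin s → ℤ) → k) u,
      convMap (Finsupp.single v (c : k)) f u = (c : k) * f (u - v) := by
    intro f u
    simp only [convMap, LinearMap.coe_mk, AddHom.coe_mk]
    rw [Finsupp.sum_single_index (by simp)]
  constructor
  · intro f g hfg
    funext u
    have h1 := congrFun hfg (u + v)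
    rw [happ, happ, add_sub_cancel_right] at h1
    exact mul_left_cancel₀ hc h1
  · intro g
    refine ⟨fun u => (c : k)⁻¹ * g (u + v), ?_⟩
    funext u
    rw [happ, sub_add_cancel, ← mul_assoc, mul_inv_cancel₀ hc, one_mul]

/-- For `a ∈ k[Λ]` with `k` the algebraic closure of `F_p` and `Λ ≅ ℤ^s` (`s > 0`):
the equation `a * f = 0` has no nonzero solution `f : Λ → k` iff `a = c·δ_v` for some
`c ∈ kˣ`, `v ∈ Λ` (i.e. `Δ_a` is a nonzero multiple of a shift), iff `Δ_a` is invertible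
on the space of all functions `Λ → k`. -/
theorem stmt_16 (p : ℕ) [Fact p.Prime]
    (k : Type*) [Field k] [Algebra (ZMod p) k] [IsAlgClosure (ZMod p) k]
    (s : ℕ) (hs : 0 < s) (a : (Fin s → ℤ) →₀ k) :
    ((∀ f : (Fin s → ℤ) → k, convMap a f = 0 → f = 0) ↔
        ∃ (c : kˣ) (v : Fin s → ℤ), a = Finsupp.single v (c : k)) ∧
      ((∃ (c : kˣ) (v : Fin s → ℤ), a = Finsupp.single v (c : k)) ↔
        Function.Bijective (convMap a)) := by
  haveI : IsAlgClosed k := IsAlgClosure.isAlgClosed (ZMod p)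
  have hbij_ker : Function.Bijective (convMap a) →
      ∀ f : (Fin s → ℤ) → k, convMap a f = 0 → f = 0 := by
    intro hb f hf
    exact hb.injective (by rw [hf, map_zero])
  refine ⟨⟨ker_trivial_implies_monomial a,
      fun hm => hbij_ker (monomial_implies_bijective a hm)⟩,
    ⟨monomial_implies_bijective a,
      fun hb => ker_trivial_implies_monomial a (hbij_ker hb)⟩⟩
end
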